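/- Let X be an integral normal scheme, let g : T → X be a finite morphism of schemes, and let U ⊆ X be a nonempty open subscheme. Then the restriction map from sections of g over X to sections of g over U, i.e. from { s : X → T | g ∘ s = id_X } to { s : U → T | g ∘ s equals the open immersion U → X }, is bijective. (Surjectivity is the statement that any rational section of a finite morphism to a normal integral scheme is defined everywhere; injectivity follows from separatedness of g and density of U.) -/

import Mathlib

open AlgebraicGeometry CategoryTheory TopologicalSpace Polynomial
open AlgebraicGeometry.Scheme CategoryTheory.Limits


open AlgebraicGeometry CategoryTheory TopologicalSpace Polynomial
open AlgebraicGeometry.Scheme CategoryTheory.Limits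

namespace SectionExtendAux

/-- Compatibility of `Opens.fromSpecStalkOfMem` with specialization. -/
lemma opens_fromSpecStalkOfMem_specializes {X : Scheme} (U : X.Opens) {x y : X}
    (h : y ⤳ x) (hx : x ∈ U) (hy : y ∈ U) :
    Spec.map (X.presheaf.stalkSpecializes h) ≫ U.fromSpecStalkOfMem x hx =
      U.fromSpecStalkOfMem y hy := by
  rw [← cancel_mono U.ι, Category.assoc, Opens.fromSpecStalkOfMem_ι,
    Opens.fromSpecStalkOfMem_ι, SpecMap_stalkSpecializes_fromSpecStalk]

lemma partialMap_fromSpecStalkOfMem_specializes {X Y : Scheme} (f : X.PartialMap Y) {x y : X}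
    (h : y ⤳ x) (hx : x ∈ f.domain) (hy : y ∈ f.domain) :
    Spec.map (X.presheaf.stalkSpecializes h) ≫ f.fromSpecStalkOfMem hx =
      f.fromSpecStalkOfMem hy := by
  dsimp only [PartialMap.fromSpecStalkOfMem]
  rw [← Category.assoc, opens_fromSpecStalkOfMem_specializes]

open AlgebraicGeometry.Scheme

/-- The key local statement: a `K(X)`-point of `T` over `X` extends to an
`𝒪_{X,x}`-point, when `𝒪_{X,x}` is an integrally closed domain and `g` is finite. -/
lemma exists_extension_to_stalk {X T : Scheme} [IsIntegral X]
    (hnormal : ∀ x : X, IsIntegrallyClosed (X.presheaf.stalk x) ∧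
      IsDomain (X.presheaf.stalk x))
    (g : T ⟶ X) [IsFinite g] (φK : Spec X.functionField ⟶ T)
    (hφK : φK ≫ g = X.fromSpecStalk (genericPoint X)) (x : X) :
    ∃ φ : Spec (X.presheaf.stalk x) ⟶ T, φ ≫ g = X.fromSpecStalk x ∧
      Spec.map (X.presheaf.stalkSpecializes
        ((genericPoint_spec X).specializes trivial)) ≫ φ = φK := by
  haveI := (hnormal x).1
  haveI := (hnormal x).2
  have hξx : genericPoint X ⤳ x := (genericPoint_spec X).specializes trivial
  -- affine chart
  set V : X.Opens := (X.affineCover.f (X.affineCover.idx x)).opensRange with hVdef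
  have hV : IsAffineOpen V := isAffineOpen_opensRange _
  have hxV : x ∈ V := X.affineCover.covers x
  have hξV : genericPoint X ∈ V := hξx.mem_open V.2 hxV
  set W : T.Opens := g ⁻¹ᵁ V with hWdef
  have hW : IsAffineOpen W := hV.preimage g
  -- the ring maps
  set gc : Γ(X, V) ⟶ Γ(T, W) := g.appLE V W le_rfl with hgc
  have hfin : RingHom.Finite gc.hom := by
    have := IsFinite.finite_app (f := g) V hV
    rwa [show gc = g.app V by rw [hgc, Scheme.Hom.app_eq_appLE]]
  set germx : Γ(X, V) ⟶ X.presheaf.stalk x := X.presheaf.germ V x hxV with hgermx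
  set ρ : X.presheaf.stalk x ⟶ X.functionField := X.presheaf.stalkSpecializes hξx with hρ
  have hρa : (algebraMap (X.presheaf.stalk x) X.functionField) = ρ.hom := rfl
  -- φK factors through Spec Γ(T, W)
  have hrange : Set.range φK.base ⊆ Set.range hW.fromSpec.base := by
    rw [hW.range_fromSpec]
    rintro p ⟨q, rfl⟩
    show g.base (φK.base q) ∈ V
    have : (φK ≫ g).base q ∈ Set.range (X.fromSpecStalk (genericPoint X)).base := by
      rw [hφK]; exact ⟨q, rfl⟩
    rw [Scheme.range_fromSpecStalk] at this
    exact this.mem_open V.2 hξV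
  set σ : Γ(T, W) ⟶ X.functionField := Spec.preimage (IsOpenImmersion.lift hW.fromSpec φK hrange) with hσdef
  have hσ : Spec.map σ ≫ hW.fromSpec = φK := by
    rw [hσdef, Spec.map_preimage]; exact IsOpenImmersion.lift_fac _ _ _
  have hWg : Spec.map gc ≫ hV.fromSpec = hW.fromSpec ≫ g :=
    IsAffineOpen.SpecMap_appLE_fromSpec g hV hW le_rfl
  -- the key triangle
  have hcomp : gc ≫ σ = germx ≫ ρ := by
    apply Spec.map_injective
    rw [← cancel_mono hV.fromSpec]
    rw [Spec.map_comp, Spec.map_comp, Category.assoc, Category.assoc, hWg,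
      ← Category.assoc, hσ]
    rw [show Spec.map germx ≫ hV.fromSpec = X.fromSpecStalk x from
      hV.fromSpecStalk_eq_fromSpecStalk hxV]
    rw [hφK, hρ, SpecMap_stalkSpecializes_fromSpecStalk]
  -- every element of `Γ(T, W)` maps into the stalk at `x`
  have hint : ∀ b : Γ(T, W), ∃ r : X.presheaf.stalk x,
      algebraMap (X.presheaf.stalk x) X.functionField r = σ b := by
    intro b
    refine IsIntegrallyClosed.isIntegral_iff.mp ?_
    obtain ⟨p, hp, hp0⟩ := hfin.to_isIntegral b
    refine ⟨p.map germx.hom, hp.map _, ?_⟩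
    have hc' : (algebraMap (X.presheaf.stalk x) X.functionField).comp germx.hom =
        (σ.hom : Γ(T, W) →+* X.functionField).comp gc.hom := by
      rw [hρa]; exact congrArg CommRingCat.Hom.hom hcomp.symm
    rw [eval₂_map, hc', ← hom_eval₂, hp0, map_zero]
  choose t ht using hint
  have inj : Function.Injective (algebraMap (X.presheaf.stalk x) X.functionField) :=
    IsFractionRing.injective _ _
  set τ : Γ(T, W) ⟶ X.presheaf.stalk x :=
    CommRingCat.ofHom (R := Γ(T, W)) (S := X.presheaf.stalk x)
    { toFun := t
      map_one' := inj (by rw [ht, map_one, map_one])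
      map_mul' := fun a b => inj (by rw [ht, map_mul, map_mul, ht, ht])
      map_zero' := inj (by rw [ht, map_zero, map_zero])
      map_add' := fun a b => inj (by rw [ht, map_add, map_add, ht, ht]) } with hτdef
  have hτρ : τ ≫ ρ = σ := CommRingCat.hom_ext (RingHom.ext fun b => ht b)
  have hτg : gc ≫ τ = germx := CommRingCat.hom_ext (RingHom.ext fun a => inj (by
    show algebraMap (X.presheaf.stalk x) X.functionField (t (gc a)) = _
    rw [ht, ← CommRingCat.comp_apply, hcomp, CommRingCat.comp_apply, hρa]))
  refine ⟨Spec.map τ ≫ hW.fromSpec, ?_, ?_⟩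
  · rw [Category.assoc, ← hWg, ← Category.assoc, ← Spec.map_comp, hτg]
    exact hV.fromSpecStalk_eq_fromSpecStalk hxV
  · rw [← Category.assoc, ← Spec.map_comp, hτρ, hσ]


end SectionExtendAux

/-- Let `X` be an integral scheme which is normal (all local rings are integrally closed
domains), `g : T ⟶ X` a finite morphism of schemes, and `U` a nonempty open subscheme of `X`.
Then restriction from sections of `g` over `X` to sections of `g` over `U` is bijective. -/
theorem sections_of_finite_morphism_extend
    (X T : Scheme) [IsIntegral X]
    (hnormal : ∀ x : X, IsIntegrallyClosed (X.presheaf.stalk x) ∧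
      IsDomain (X.presheaf.stalk x))
    (g : T ⟶ X) [IsFinite g]
    (U : X.Opens) (hU : Nonempty U) :
    Function.Bijective
      (fun s : { s : X ⟶ T // s ≫ g = 𝟙 X } =>
        (⟨U.ι ≫ s.1, by rw [Category.assoc, s.2, Category.comp_id]⟩ :
          { s : (U : Scheme) ⟶ T // s ≫ g = U.ι })) := by
  classical
  have hUne : (U : Set X).Nonempty := let ⟨u⟩ := hU; ⟨u.1, u.2⟩
  have hUd : Dense (U : Set X) := U.isOpen.dense hUne
  constructor
  · rintro ⟨s₁, hs₁⟩ ⟨s₂, hs₂⟩ h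
    haveI : IsDominant U.ι := Opens.isDominant_ι hUd
    exact Subtype.ext (ext_of_isDominant_of_isSeparated g (hs₁.trans hs₂.symm) U.ι
      (congrArg Subtype.val h))
  · rintro ⟨s, hs⟩
    letI : T.Over X := ⟨g⟩
    set f₀ : X.PartialMap T := ⟨U, hUd, s⟩ with hf₀
    have hξU : genericPoint X ∈ U :=
      Specializes.mem_open ((genericPoint_spec X).specializes trivial) U.isOpen hUne.some_mem
    set φK : Spec X.functionField ⟶ T := f₀.fromFunctionField with hφKdef
    have hφK : φK ≫ g = X.fromSpecStalk (genericPoint X) := by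
      show (U.fromSpecStalkOfMem _ _ ≫ s) ≫ g = _
      rw [Category.assoc, hs, Opens.fromSpecStalkOfMem_ι]
    choose φ hφ1 hφ2 using fun x => SectionExtendAux.exists_extension_to_stalk hnormal g φK hφK x
    set ψ : ∀ x : X, X.PartialMap T := fun x =>
      PartialMap.ofFromSpecStalk (𝟙 X) g (φ x) (by rw [hφ1, Category.comp_id]) with hψdef
    have hmem : ∀ x, x ∈ (ψ x).domain := fun x =>
      PartialMap.mem_domain_ofFromSpecStalk (𝟙 X) g (φ x) _
    have hcompg : ∀ x, (ψ x).hom ≫ g = (ψ x).domain.ι := fun x => by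
      simpa using PartialMap.ofFromSpecStalk_comp (𝟙 X) g (φ x) _
    haveI hover : ∀ x, (ψ x).IsOver X := fun x => ⟨hcompg x⟩
    have hψξmem : ∀ x, genericPoint X ∈ (ψ x).domain := fun x =>
      Specializes.mem_open ((genericPoint_spec X).specializes trivial)
        (ψ x).domain.isOpen (hmem x)
    have hψK : ∀ x, (ψ x).fromSpecStalkOfMem (hψξmem x) = φK := fun x => by
      rw [← SectionExtendAux.partialMap_fromSpecStalkOfMem_specializes (ψ x)
        ((genericPoint_spec X).specializes trivial) (hmem x) (hψξmem x),
        PartialMap.fromSpecStalkOfMem_ofFromSpecStalk]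
      exact hφ2 x
    have hequiv : ∀ x y, (ψ x).equiv (ψ y) := fun x y =>
      PartialMap.equiv_of_fromSpecStalkOfMem_eq _ _ (hψξmem x) (hψξmem y)
        ((hψK x).trans (hψK y).symm)
    have hequiv₀ : ∀ x, (ψ x).equiv f₀ := fun x =>
      PartialMap.equiv_of_fromSpecStalkOfMem_eq _ _ (hψξmem x) hξU (hψK x)
    haveI : IsSeparated (T ↘ X) := inferInstanceAs (IsSeparated g)
    set 𝒰 : X.OpenCover :=
      Cover.mkOfCovers X (fun x => (ψ x).domain.toScheme) (fun x => (ψ x).domain.ι)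
        (fun x => ⟨x, ⟨x, hmem x⟩, rfl⟩) with h𝒰
    have compat : ∀ x y : X, pullback.fst (ψ x).domain.ι (ψ y).domain.ι ≫ (ψ x).hom =
        pullback.snd (ψ x).domain.ι (ψ y).domain.ι ≫ (ψ y).hom := by
      intro x y
      haveI := hover x
      haveI := hover y
      have e := (PartialMap.equiv_iff_of_isSeparated (S := X) (f := ψ x) (g := ψ y)).mp
        (hequiv x y)
      simp only [PartialMap.restrict_hom] at e
      rw [← cancel_epi (isPullback_opens_inf (ψ x).domain (ψ y).domain).isoPullback.hom,
        ← Category.assoc, ← Category.assoc]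
      show ((isPullback_opens_inf _ _).isoPullback.hom ≫ pullback.fst _ _) ≫ _ =
        ((isPullback_opens_inf _ _).isoPullback.hom ≫ pullback.snd _ _) ≫ _
      rw [IsPullback.isoPullback_hom_fst, IsPullback.isoPullback_hom_snd]
      exact e
    set r : X ⟶ T := 𝒰.glueMorphisms (fun x => (ψ x).hom) compat with hrdef
    have hrι : ∀ x, (ψ x).domain.ι ≫ r = (ψ x).hom := fun x =>
      𝒰.ι_glueMorphisms (fun x => (ψ x).hom) compat x
    have hr : r ≫ g = 𝟙 X := by
      apply 𝒰.hom_ext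
      intro x
      rw [← Category.assoc]
      show ((ψ x).domain.ι ≫ r) ≫ g = (ψ x).domain.ι ≫ 𝟙 X
      rw [hrι x, hcompg x, Category.comp_id]
    refine ⟨⟨r, hr⟩, Subtype.ext ?_⟩
    show U.ι ≫ r = s
    obtain ⟨Wd, hWd, hWl, hWr, he⟩ := hequiv₀ hUne.some
    simp only [PartialMap.restrict_hom] at he
    haveI : IsDominant (X.homOfLE hWr) := Opens.isDominant_homOfLE hWd _
    apply ext_of_isDominant_of_isSeparated g ?_ (X.homOfLE hWr)
    · rw [← Category.assoc, Scheme.homOfLE_ι, ← X.homOfLE_ι hWl, Category.assoc]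
      show X.homOfLE hWl ≫ ((ψ hUne.some).domain.ι ≫ r) = X.homOfLE hWr ≫ s
      rw [hrι]
      exact he
    · rw [Category.assoc, hr, Category.comp_id, hs]
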